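/- Let I ⊆ M = ⟨x_1,...,x_n⟩ be an ideal and let G be a reduced Gröbner basis of I with respect to some term ordering σ. Then the number of elements of G whose σ-leading term is an indeterminate is at most dim_K(Lin_M(I)). -/

import Mathlib

open MvPolynomial

/-- A term ordering on the monomials of `K[x_1,...,x_n]`: a linear order on
exponent vectors compatible with addition and with `1` as smallest term. -/
structure TermOrder (n : ℕ) where
  le : (Fin n →₀ ℕ) → (Fin n →₀ ℕ) → Prop
  le_refl : ∀ m, le m m
  le_trans : ∀ a b c, le a b → le b c → le a c
  le_antisymm : ∀ a b, le a b → le b a → a = b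
  le_total : ∀ a b, le a b ∨ le b a
  add_le_add : ∀ a b c, le a b → le (a + c) (b + c)
  zero_le : ∀ m, le 0 m

variable {K : Type*} [Field K] {n s : ℕ}

/-- `m` is the `σ`-leading term of `f`. -/
def TermOrder.IsLeadingTerm (σ : TermOrder n) (f : MvPolynomial (Fin n) K)
    (m : Fin n →₀ ℕ) : Prop :=
  m ∈ f.support ∧ ∀ m' ∈ f.support, σ.le m' m

/-- `G` is a `σ`-Gröbner basis of the set `S` (typically an ideal or an
elimination ideal): `G ⊆ S` and the leading term of every nonzero element of `S`
is divisible by the leading term of some element of `G`. -/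
def IsGBOn (σ : TermOrder n) (S G : Set (MvPolynomial (Fin n) K)) : Prop :=
  G ⊆ S ∧ ∀ f ∈ S, f ≠ 0 → ∃ g ∈ G, ∃ mg mf, σ.IsLeadingTerm g mg ∧
    σ.IsLeadingTerm f mf ∧ mg ≤ mf

/-- `G` is the reduced `σ`-Gröbner basis of `S`: a monic, fully interreduced
`σ`-Gröbner basis. -/
def IsReducedGBOn (σ : TermOrder n) (S G : Set (MvPolynomial (Fin n) K)) : Prop :=
  IsGBOn σ S G ∧
  (∀ g ∈ G, ∃ m, σ.IsLeadingTerm g m ∧ MvPolynomial.coeff m g = 1) ∧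
  (∀ g ∈ G, ∀ m ∈ g.support, ∀ g' ∈ G, ∀ m', σ.IsLeadingTerm g' m' → m' ≤ m →
    g' = g ∧ m' = m)

/-- The indeterminate `z` divides some term in the support of `f`. -/
def Occurs (z : Fin n) (f : MvPolynomial (Fin n) K) : Prop :=
  ∃ m ∈ f.support, m z ≠ 0

/-- `tail_z(f) = z - (1/c) f`, where `c` is the coefficient of `z` in `f`. -/
noncomputable def tailTo (f : MvPolynomial (Fin n) K) (z : Fin n) :
    MvPolynomial (Fin n) K :=
  X z - (MvPolynomial.coeff (Finsupp.single z 1) f)⁻¹ • f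

/-- `f` is `z`-separating: the coefficient of `z` in `f` is nonzero and `z`
divides no term in the support of `tail_z(f)`. -/
def IsSeparating (f : MvPolynomial (Fin n) K) (z : Fin n) : Prop :=
  MvPolynomial.coeff (Finsupp.single z 1) f ≠ 0 ∧ ¬ Occurs z (tailTo f z)

/-- `(f_1,...,f_s)` is coherently `Z`-separating for `Z = {z_1,...,z_s}`. -/
def CoherentlySeparating (z : Fin s → Fin n) (f : Fin s → MvPolynomial (Fin n) K) : Prop :=
  Function.Injective z ∧ (∀ i, f i ≠ 0 ∧ IsSeparating (f i) (z i)) ∧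
  ∀ i j, j ≠ i → ¬ Occurs (z i) (f j)

/-- The `M`-linear part of `f` for `M = ⟨x_1-a_1,...,x_n-a_n⟩`. -/
noncomputable def linPart (a : Fin n → K) (f : MvPolynomial (Fin n) K) :
    MvPolynomial (Fin n) K :=
  (MvPolynomial.aeval fun i => X i - C (a i))
    (MvPolynomial.homogeneousComponent 1 ((MvPolynomial.aeval fun i => X i + C (a i)) f))

/-- The `M`-linear part of an ideal `I`: the `K`-span of `{Lin_M(f) : f ∈ I}`. -/
noncomputable def linSpace (a : Fin n → K) (I : Ideal (MvPolynomial (Fin n) K)) :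
    Submodule K (MvPolynomial (Fin n) K) :=
  Submodule.span K (linPart a '' (I : Set (MvPolynomial (Fin n) K)))

/-- The linear maximal ideal `M = ⟨x_1-a_1,...,x_n-a_n⟩`. -/
noncomputable def linMaxIdeal (a : Fin n → K) : Ideal (MvPolynomial (Fin n) K) :=
  Ideal.span (Set.range fun i => X i - C (a i))

/-- `M_1`, the `K`-vector space spanned by `x_1-a_1,...,x_n-a_n`. -/
noncomputable def linForms (a : Fin n → K) : Submodule K (MvPolynomial (Fin n) K) :=
  Submodule.span K (Set.range fun i => X i - C (a i))

/-- The elimination ideal `I ∩ K[X∖Z]`, viewed as the set of polynomials of `I`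
in which no indeterminate of `Z` occurs. -/
def elimSet (z : Fin s → Fin n) (I : Ideal (MvPolynomial (Fin n) K)) :
    Set (MvPolynomial (Fin n) K) :=
  {p | p ∈ I ∧ ∀ i, ¬ Occurs (z i) p}

/-- `r` is the normal form of `p` with respect to (the reduced Gröbner basis of)
`S`: `p - r ∈ S` and no term of `r` is divisible by a leading term of `S`. -/
def IsNormalFormOn (σ : TermOrder n) (S : Set (MvPolynomial (Fin n) K))
    (p r : MvPolynomial (Fin n) K) : Prop :=
  p - r ∈ S ∧ ∀ f ∈ S, f ≠ 0 → ∀ mf m, σ.IsLeadingTerm f mf → m ∈ r.support → ¬ mf ≤ m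

/-- `σ` is a `Z`-separating term ordering for `I`. -/
def IsZSepOrder (σ : TermOrder n) (z : Fin s → Fin n)
    (I : Ideal (MvPolynomial (Fin n) K)) : Prop :=
  ∃ p : Fin s → MvPolynomial (Fin n) K,
    (∀ i, p i ∈ I ∧ p i ≠ 0 ∧ σ.IsLeadingTerm (p i) (Finsupp.single (z i) 1)) ∧
    CoherentlySeparating z p

open Classical in
/-- The substitution `x_i ↦ x_i` for `x_i ∉ Z` and `z_j ↦ tail_{z_j}(f_j)`. -/
noncomputable def subMap (z : Fin s → Fin n) (f : Fin s → MvPolynomial (Fin n) K)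
    (i : Fin n) : MvPolynomial (Fin n) K :=
  if h : ∃ j, z j = i then tailTo (f h.choose) (z h.choose) else X i

open Classical in
/-- The projection of `P` onto `P̂ = K[X∖Z]`. -/
noncomputable def killZ (z : Fin s → Fin n) :
    MvPolynomial (Fin n) K →ₐ[K] MvPolynomial {i : Fin n // ¬ ∃ j, z j = i} K :=
  MvPolynomial.aeval fun i => if h : ∃ j, z j = i then 0 else X ⟨i, h⟩

/-- The elimination ideal `I ∩ P̂` as an ideal of `P̂ = K[X∖Z]`. -/
noncomputable def elimIdeal (z : Fin s → Fin n) (I : Ideal (MvPolynomial (Fin n) K)) :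
    Ideal (MvPolynomial {i : Fin n // ¬ ∃ j, z j = i} K) :=
  Ideal.comap (MvPolynomial.rename
    (Subtype.val : {i : Fin n // ¬ ∃ j, z j = i} → Fin n)).toRingHom I

/-- The composition `ψ : P → P̂ → P̂/(I ∩ P̂)` of the substitution
`z_j ↦ tail_{z_j}(f_j)` with the canonical projection. -/
noncomputable def reembedHom (z : Fin s → Fin n) (f : Fin s → MvPolynomial (Fin n) K)
    (I : Ideal (MvPolynomial (Fin n) K)) :
    MvPolynomial (Fin n) K →+*
      (MvPolynomial {i : Fin n // ¬ ∃ j, z j = i} K ⧸ elimIdeal z I) :=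
  (Ideal.Quotient.mk (elimIdeal z I)).comp
    (((killZ z).comp (MvPolynomial.aeval (subMap z f))).toRingHom)

/-- The cotangent space `m/m²` as a `K`-vector space. -/
abbrev cotSpace (K : Type*) [Field K] {R : Type*} [CommRing R] [Algebra K R]
    (m : Ideal R) :=
  (m.restrictScalars K) ⧸
    Submodule.comap (Submodule.subtype (m.restrictScalars K)) ((m ^ 2).restrictScalars K)

/-- The embedding dimension of an affine `K`-algebra `R`: the minimal number `m`
of indeterminates of a presentation `R ≅ K[y_1,...,y_m]/I'`. -/
noncomputable def edim (K : Type*) [Field K] (R : Type*) [CommRing R] [Algebra K R] : ℕ :=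
  sInf {m | ∃ I' : Ideal (MvPolynomial (Fin m) K),
    Nonempty (R ≃ₐ[K] (MvPolynomial (Fin m) K ⧸ I'))}

/-- A marked reduced Gröbner basis of `I`: a reduced `σ`-Gröbner basis together
with the marking of the `σ`-leading term of each element. -/
def IsMarkedReducedGB (I : Ideal (MvPolynomial (Fin n) K))
    (G : Set ((Fin n →₀ ℕ) × MvPolynomial (Fin n) K)) : Prop :=
  ∃ σ : TermOrder n, IsReducedGBOn σ (I : Set (MvPolynomial (Fin n) K)) (Prod.snd '' G) ∧
    ∀ p ∈ G, σ.IsLeadingTerm p.2 p.1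

section Aux
variable {K : Type*} [Field K] {n : ℕ}

lemma eq_single_of_degree_one (m : Fin n →₀ ℕ) (h : Finsupp.degree m = 1) :
    ∃ i, m = Finsupp.single i 1 := by
  classical
  have hne : m ≠ 0 := by
    intro h0; rw [h0, map_zero] at h; exact one_ne_zero h.symm
  obtain ⟨i, hi⟩ := Finsupp.ne_iff.mp hne
  rw [Finsupp.coe_zero, Pi.zero_apply] at hi
  have hisupp : i ∈ m.support := Finsupp.mem_support_iff.mpr hi
  have hle : m i ≤ Finsupp.degree m := by
    unfold Finsupp.degree
    exact Finset.single_le_sum (fun j _ => Nat.zero_le _) hisupp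
  have hmi : m i = 1 := le_antisymm (h ▸ hle) (Nat.one_le_iff_ne_zero.mpr hi)
  refine ⟨i, ?_⟩
  ext j
  rcases eq_or_ne j i with rfl | hj
  · simp [hmi]
  · simp only [Finsupp.single_apply, if_neg (Ne.symm hj)]
    by_contra hj0
    have hjsupp : j ∈ m.support := Finsupp.mem_support_iff.mpr hj0
    have : m i + m j ≤ Finsupp.degree m := by
      unfold Finsupp.degree
      have := Finset.add_sum_erase _ m hisupp
      calc m i + m j ≤ m i + ∑ k ∈ m.support.erase i, m k := by
            gcongr
            exact Finset.single_le_sum (fun k _ => Nat.zero_le _)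
              (Finset.mem_erase.mpr ⟨hj, hjsupp⟩)
        _ = _ := Finset.add_sum_erase _ m hisupp
    omega

lemma homogeneousComponent_one_mem_span (p : MvPolynomial (Fin n) K) :
    homogeneousComponent 1 p ∈ Submodule.span K (Set.range (X : Fin n → MvPolynomial (Fin n) K)) := by
  rw [homogeneousComponent_apply]
  apply Submodule.sum_mem
  intro m hm
  simp only [Finset.mem_filter] at hm
  obtain ⟨i, rfl⟩ := eq_single_of_degree_one m hm.2
  have : (monomial (Finsupp.single i 1)) (coeff (Finsupp.single i 1) p)
      = (coeff (Finsupp.single i 1) p) • X i := by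
    rw [MvPolynomial.smul_eq_C_mul, MvPolynomial.X, MvPolynomial.C_mul_monomial, mul_one]
  rw [this]
  exact Submodule.smul_mem _ _ (Submodule.subset_span ⟨i, rfl⟩)

lemma linPart_zero_eq (f : MvPolynomial (Fin n) K) :
    linPart (0 : Fin n → K) f = homogeneousComponent 1 f := by
  simp [linPart, aeval_X_left_apply]

lemma coeff_single_homogeneousComponent_one (p : MvPolynomial (Fin n) K) (i : Fin n) :
    coeff (Finsupp.single i 1) (homogeneousComponent 1 p) = coeff (Finsupp.single i 1) p := by
  rw [coeff_homogeneousComponent, if_pos (by simp [Finsupp.degree_single])]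

end Aux


/-- For a reduced `σ`-Gröbner basis `G` of `I ⊆ M = ⟨x_1,...,x_n⟩`,
the number of elements of `G` whose `σ`-leading term is an indeterminate is at most
`dim_K Lin_M(I)`. -/
theorem statement14 (I : Ideal (MvPolynomial (Fin n) K))
    (hI : I ≤ linMaxIdeal (0 : Fin n → K)) (σ : TermOrder n)
    (G : Set (MvPolynomial (Fin n) K))
    (hG : IsReducedGBOn σ (I : Set (MvPolynomial (Fin n) K)) G) :
    Set.ncard {g | g ∈ G ∧ ∃ i : Fin n, σ.IsLeadingTerm g (Finsupp.single i 1)} ≤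
      Module.finrank K ↥(linSpace (0 : Fin n → K) I) := by
  classical
  set S : Set (MvPolynomial (Fin n) K) :=
    {g | g ∈ G ∧ ∃ i : Fin n, σ.IsLeadingTerm g (Finsupp.single i 1)} with hS
  have hVle : linSpace (0 : Fin n → K) I ≤
      Submodule.span K (Set.range (X : Fin n → MvPolynomial (Fin n) K)) := by
    rw [linSpace, Submodule.span_le]
    rintro _ ⟨f, hf, rfl⟩
    rw [linPart_zero_eq]
    exact homogeneousComponent_one_mem_span f
  haveI : FiniteDimensional K
      (Submodule.span K (Set.range (X : Fin n → MvPolynomial (Fin n) K))) :=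
    FiniteDimensional.span_of_finite K (Set.finite_range X)
  haveI : FiniteDimensional K (linSpace (0 : Fin n → K) I) :=
    Submodule.finiteDimensional_of_le hVle
  have hsel : ∀ g : S, ∃ i : Fin n,
      σ.IsLeadingTerm (g : MvPolynomial (Fin n) K) (Finsupp.single i 1) := fun g => g.2.2
  choose z hz using hsel
  have hdiag : ∀ g : S, coeff (Finsupp.single (z g) 1) (g : MvPolynomial (Fin n) K) = 1 := by
    intro g
    obtain ⟨m, hm, hc⟩ := hG.2.1 g g.2.1
    have hme : m = Finsupp.single (z g) 1 :=
      σ.le_antisymm _ _ ((hz g).2 m hm.1) (hm.2 _ (hz g).1)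
    rwa [hme] at hc
  have hoff : ∀ g h : S, (g : MvPolynomial (Fin n) K) ≠ (h : MvPolynomial (Fin n) K) →
      coeff (Finsupp.single (z h) 1) (g : MvPolynomial (Fin n) K) = 0 := by
    intro g h hne
    by_contra hc
    have hsupp : Finsupp.single (z h) 1 ∈ (g : MvPolynomial (Fin n) K).support :=
      MvPolynomial.mem_support_iff.mpr hc
    exact hne (hG.2.2 g g.2.1 _ hsupp h h.2.1 _ (hz h) le_rfl).1.symm
  have hmem : ∀ g : S,
      homogeneousComponent 1 (g : MvPolynomial (Fin n) K) ∈ linSpace (0 : Fin n → K) I :=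
    fun g => Submodule.subset_span ⟨g, hG.1.1 g.2.1, linPart_zero_eq _⟩
  set v : S → linSpace (0 : Fin n → K) I :=
    fun g => ⟨homogeneousComponent 1 (g : MvPolynomial (Fin n) K), hmem g⟩ with hv
  have hli : LinearIndependent K v := by
    rw [linearIndependent_iff']
    intro t c hsum g₀ hg₀
    have h0 := congrArg (fun q : linSpace (0 : Fin n → K) I =>
      coeff (Finsupp.single (z g₀) 1) (q : MvPolynomial (Fin n) K)) hsum
    simp only [hv, Submodule.coe_sum, SetLike.val_smul, ZeroMemClass.coe_zero,
      MvPolynomial.coeff_zero, MvPolynomial.coeff_sum, MvPolynomial.coeff_smul,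
      smul_eq_mul, coeff_single_homogeneousComponent_one] at h0
    have hsum' : ∑ g ∈ t, c g * coeff (Finsupp.single (z g₀) 1)
        (g : MvPolynomial (Fin n) K) = c g₀ := by
      rw [Finset.sum_eq_single g₀]
      · rw [hdiag g₀, mul_one]
      · intro g _ hgne
        rw [hoff g g₀ (fun he => hgne (Subtype.coe_injective he)), mul_zero]
      · intro h; exact absurd hg₀ h
    rw [hsum'] at h0
    exact h0
  haveI : Finite S := hli.finite
  haveI : Fintype S := Fintype.ofFinite _
  have hcard := hli.fintype_card_le_finrank
  rw [← Nat.card_coe_set_eq, Nat.card_eq_fintype_card]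
  exact hcard
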